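/- The matrix H whose block rows are H_i = (1, β_i, …, β_i^{m−1}) ⊗ V_i over all eigenvalues β_i of a λ-QT code C (with V_i a basis matrix of the eigenspace of β_i) is a parity-check matrix for C, i.e., C = { c ∈ F_q^{mℓ} : H cᵀ = 0 }. -/

import Mathlib

open Polynomial

/-- The `F_q[x]`-submodule of `F_q[x]^ℓ` spanned by the rows of `G`. -/
noncomputable def qtSpan {F : Type*} [Field F] {ℓ : ℕ}
    (G : Matrix (Fin ℓ) (Fin ℓ) (Polynomial F)) :
    Submodule (Polynomial F) (Fin ℓ → Polynomial F) :=
  Submodule.span (Polynomial F) (Set.range fun i => G i)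

/-- The `F`-linear map sending an `m × ℓ` array over `F` to the vector of
column polynomials `c_j(x) = ∑_k c_{k,j} x^k`. -/
noncomputable def toPolyL (F : Type*) [CommSemiring F] (m ℓ : ℕ) :
    (Fin m × Fin ℓ → F) →ₗ[F] (Fin ℓ → Polynomial F) where
  toFun c := fun j => ∑ k : Fin m, Polynomial.C (c (k, j)) * Polynomial.X ^ (k : ℕ)
  map_add' c c' := by
    funext j
    simp [map_add, add_mul, Finset.sum_add_distrib]
  map_smul' a c := by
    funext j
    simp [Polynomial.smul_eq_C_mul, Finset.mul_sum, mul_assoc]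

/-- Zero remainder lemma: an element of the row span whose components have degree
strictly below the diagonal degrees must vanish. -/
lemma qt_zero_of_deg_lt {K : Type*} [Field K] {ℓ : ℕ}
    (G : Matrix (Fin ℓ) (Fin ℓ) K[X])
    (hupper : ∀ i j, j < i → G i j = 0)
    (g : Fin ℓ → K[X]) (hg : g ∈ qtSpan G)
    (hdeg : ∀ j, (g j).degree < (G j j).degree) : g = 0 := by
  rw [qtSpan, Submodule.mem_span_range_iff_exists_fun] at hg
  obtain ⟨p, hp⟩ := hg
  have hall : ∀ r, p r = 0 := by
    by_contra hne
    push_neg at hne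
    obtain ⟨r, hr⟩ := hne
    classical
    have hsne : (Finset.univ.filter fun r => p r ≠ 0).Nonempty :=
      ⟨r, by simp [hr]⟩
    obtain ⟨r0, hr0mem, hr0min⟩ := Finset.exists_min_image _ id hsne
    simp only [Finset.mem_filter] at hr0mem
    have hg0 : g r0 = p r0 * G r0 r0 := by
      have := congrFun hp r0
      rw [Finset.sum_apply] at this
      rw [← this]
      rw [Finset.sum_eq_single r0]
      · simp [Pi.smul_apply, smul_eq_mul]
      · intro b _ hb
        rcases lt_or_gt_of_ne hb with h | h
        · have : p b = 0 := by
            by_contra hb0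
            have hmem : b ∈ Finset.univ.filter fun r => p r ≠ 0 := by simp [hb0]
            have := hr0min b hmem
            simp only [id] at this
            exact absurd (lt_of_lt_of_le h this) (lt_irrefl _)
          simp [this]
        · simp [hupper b r0 h]
      · intro h; exact absurd (Finset.mem_univ r0) h
    have hdegc : (G r0 r0).degree ≤ (g r0).degree := by
      rw [hg0, degree_mul]
      have : (0 : WithBot ℕ) ≤ (p r0).degree := zero_le_degree_iff.2 hr0mem.2
      exact le_add_of_nonneg_left this
    exact absurd (lt_of_le_of_lt hdegc (hdeg r0)) (lt_irrefl _)
  rw [← hp]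
  funext j
  simp [hall]

/-- If `w` is orthogonal to the kernel of `M.mulVec`, then `w` lies in the row span of `M`. -/
lemma qt_mem_rowspan_of_orth {K : Type*} [Field K] {n : ℕ}
    (M : Matrix (Fin n) (Fin n) K) (w : Fin n → K)
    (h : ∀ v, M.mulVec v = 0 → ∑ j, w j * v j = 0) :
    w ∈ Submodule.span K (Set.range fun r => M r) := by
  by_contra hw
  obtain ⟨φ, hφw, hφ⟩ := Submodule.exists_dual_map_eq_bot_of_notMem hw inferInstance
  set v : Fin n → K := fun j => φ (Pi.single j 1) with hv
  have hφeq : ∀ u : Fin n → K, φ u = ∑ j, u j * v j := by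
    intro u
    have : u = ∑ j, u j • (Pi.single j (1 : K) : Fin n → K) := by
      funext x
      simp [Finset.sum_apply, Pi.single_apply]
    conv_lhs => rw [this]
    rw [map_sum]
    simp [hv, smul_eq_mul]
  have hker : M.mulVec v = 0 := by
    funext r
    have hrow : φ (M r) = 0 := by
      have : φ (M r) ∈ Submodule.map φ (Submodule.span K (Set.range fun r => M r)) :=
        Submodule.mem_map_of_mem (Submodule.subset_span ⟨r, rfl⟩)
      rw [hφ] at this
      simpa using this
    rw [hφeq] at hrow
    simpa [Matrix.mulVec, dotProduct] using hrow
  have := h v hker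
  rw [hφeq] at hφw
  exact hφw this

/-- One round of reduction of a vector of polynomials by the rows of `G`. -/
noncomputable def qtRed {F : Type*} [Field F] {ℓ : ℕ}
    (G : Matrix (Fin ℓ) (Fin ℓ) (Polynomial F)) :
    ℕ → (Fin ℓ → Polynomial F) → (Fin ℓ → Polynomial F)
  | 0, g => g
  | (n+1), g =>
      if h : n < ℓ then
        qtRed G n g - (qtRed G n g ⟨n, h⟩ /ₘ G ⟨n, h⟩ ⟨n, h⟩) • G ⟨n, h⟩
      else qtRed G n g

lemma qtRed_sub_mem {F : Type*} [Field F] {ℓ : ℕ}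
    (G : Matrix (Fin ℓ) (Fin ℓ) (Polynomial F)) (g : Fin ℓ → Polynomial F) :
    ∀ n, g - qtRed G n g ∈ qtSpan G := by
  intro n
  induction n with
  | zero => simp [qtRed, qtSpan]
  | succ n ih =>
    rw [qtRed]
    split
    · next h =>
      have : g - (qtRed G n g - (qtRed G n g ⟨n, h⟩ /ₘ G ⟨n, h⟩ ⟨n, h⟩) • G ⟨n, h⟩)
          = (g - qtRed G n g) + (qtRed G n g ⟨n, h⟩ /ₘ G ⟨n, h⟩ ⟨n, h⟩) • G ⟨n, h⟩ := by
        abel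
      rw [this]
      exact Submodule.add_mem _ ih
        (Submodule.smul_mem _ _ (Submodule.subset_span ⟨_, rfl⟩))
    · exact ih

lemma qtRed_deg_lt {F : Type*} [Field F] {ℓ : ℕ}
    (G : Matrix (Fin ℓ) (Fin ℓ) (Polynomial F))
    (hupper : ∀ i j, j < i → G i j = 0) (hmonic : ∀ j, (G j j).Monic)
    (g : Fin ℓ → Polynomial F) :
    ∀ n, ∀ j : Fin ℓ, (j : ℕ) < n → (qtRed G n g j).degree < (G j j).degree := by
  intro n
  induction n with
  | zero => intro j hj; exact absurd hj (Nat.not_lt_zero _)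
  | succ n ih =>
    intro j hj
    rw [qtRed]
    split
    · next h =>
      set N : Fin ℓ := ⟨n, h⟩ with hN
      rcases Nat.lt_or_ge (j : ℕ) n with hlt | hge
      · have hGNj : G N j = 0 := hupper N j (by simpa [hN, Fin.lt_def] using hlt)
        simp only [Pi.sub_apply, Pi.smul_apply, hGNj, smul_eq_mul, mul_zero, sub_zero]
        exact ih j hlt
      · have hjN : j = N := by
          apply Fin.ext
          simp only [hN]
          omega
        rw [hjN]
        simp only [Pi.sub_apply, Pi.smul_apply, smul_eq_mul]
        have heq : qtRed G n g N - qtRed G n g N /ₘ G N N * G N N = qtRed G n g N %ₘ G N N := by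
          rw [modByMonic_eq_sub_mul_div _ (G N N)]
          ring
        rw [heq]
        exact degree_modByMonic_lt _ (hmonic N)
    · next h =>
      exact ih j (lt_of_lt_of_le j.isLt (Nat.le_of_not_lt h))

/-- Mapping a member of the row span along a field embedding lands
in the row span of the mapped matrix. -/
lemma qt_map_mem {F E : Type*} [Field F] [Field E] (f : F →+* E) {ℓ : ℕ}
    (G : Matrix (Fin ℓ) (Fin ℓ) (Polynomial F))
    (v : Fin ℓ → Polynomial F) (hv : v ∈ qtSpan G) :
    (fun j => (v j).map f) ∈ qtSpan (Matrix.of fun r c => (G r c).map f) := by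
  induction hv using Submodule.span_induction with
  | mem x hx =>
    obtain ⟨r, rfl⟩ := hx
    exact Submodule.subset_span ⟨r, rfl⟩
  | zero =>
    have heq : (fun j => ((0 : Fin ℓ → Polynomial F) j).map f)
        = (0 : Fin ℓ → Polynomial E) := by funext j; simp
    rw [heq]; exact Submodule.zero_mem _
  | add x y hx hy ihx ihy =>
    have heq : (fun j => ((x + y) j).map f)
        = (fun j => (x j).map f) + fun j => (y j).map f := by
      funext j; simp [Polynomial.map_add]
    rw [heq]; exact Submodule.add_mem _ ihx ihy
  | smul p x hx ih =>
    have heq : (fun j => ((p • x) j).map f) = (p.map f) • fun j => (x j).map f := by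
      funext j; simp [Polynomial.map_mul]
    rw [heq]; exact Submodule.smul_mem _ _ ih

/-- `X^m - λ` factors as the product of `X - γ` over its (distinct) roots in `E`. -/
lemma qt_prod_roots {F E : Type*} [Field F] [Fintype F] [Field E] [DecidableEq E] [Algebra F E]
    {m : ℕ} (hm : 0 < m) (hco : Nat.Coprime m (Fintype.card F))
    {lam : F} (hlam : lam ≠ 0)
    (hsplit : Polynomial.Splits ((X ^ m - C lam).map (algebraMap F E))) :
    ((X ^ m - C (algebraMap F E lam)).roots.Nodup) ∧
    (∏ γ ∈ (X ^ m - C (algebraMap F E lam)).roots.toFinset, (X - C γ))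
      = X ^ m - C (algebraMap F E lam) := by
  classical
  set lamE := algebraMap F E lam with hlamE'
  have hlamE : lamE ≠ 0 := by
    rw [hlamE']
    exact (map_ne_zero_iff _ (algebraMap F E).injective).2 hlam
  have hmF : (m : F) ≠ 0 := by
    intro h
    have inst : CharP F (ringChar F) := ringChar.charP F
    have h1 : ringChar F ∣ m := (CharP.cast_eq_zero_iff F (ringChar F) m).1 h
    have h2 : ringChar F ∣ Fintype.card F := by
      have : ((Fintype.card F : ℕ) : F) = 0 := FiniteField.cast_card_eq_zero F
      exact (CharP.cast_eq_zero_iff F (ringChar F) _).1 this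
    have : ringChar F = 1 := Nat.dvd_one.mp (hco ▸ Nat.dvd_gcd h1 h2)
    exact CharP.char_ne_one F (ringChar F) this
  have hmE : (m : E) ≠ 0 := by
    intro h
    apply hmF
    apply (algebraMap F E).injective
    simpa using h
  have hsep : (X ^ m - C lamE).Separable := separable_X_pow_sub_C lamE hmE hlamE
  have hnodup : (X ^ m - C lamE).roots.Nodup := nodup_roots hsep
  refine ⟨hnodup, ?_⟩
  have hmap : (X ^ m - C lam).map (algebraMap F E) = X ^ m - C lamE := by
    simp [Polynomial.map_sub, Polynomial.map_pow, hlamE']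
  have hmonicE : (X ^ m - C lamE).Monic := monic_X_pow_sub_C _ hm.ne'
  have hsplitsE : ((X ^ m - C lamE)).Splits := by
    rw [← hmap]
    exact hsplit
  have hcard : (X ^ m - C lamE).roots.card = (X ^ m - C lamE).natDegree :=
    splits_iff_card_roots.1 hsplitsE
  have hprod := prod_multiset_X_sub_C_of_monic_of_roots_card_eq hmonicE hcard
  calc (∏ γ ∈ (X ^ m - C lamE).roots.toFinset, (X - C γ))
      = (Multiset.map (fun a => X - C a) (X ^ m - C lamE).roots).prod := by
        rw [Finset.prod_eq_multiset_prod, Multiset.toFinset_val,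
          Multiset.dedup_eq_self.2 hnodup]
    _ = X ^ m - C lamE := hprod

/-- The spectral matrix `H` is a parity-check matrix for the quasi-twisted code. -/
theorem stmt13 {F E : Type*} [Field F] [Fintype F] [Field E] [Algebra F E]
    (m ℓ : ℕ) (hm : 0 < m) (hℓ : 0 < ℓ)
    (hco : Nat.Coprime m (Fintype.card F)) (lam : F) (hlam : lam ≠ 0)
    (G : Matrix (Fin ℓ) (Fin ℓ) (Polynomial F))
    (hupper : ∀ i j, j < i → G i j = 0)
    (hmonic : ∀ j, (G j j).Monic)
    (hdiag : ∀ j, G j j ∣ X ^ m - C lam)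
    (hdeg : ∀ i j, i < j → (G i j).degree < (G j j).degree)
    (hfull : ∀ i j, i ≠ j → G j j = X ^ m - C lam → G i j = 0)
    (hK : ∀ j : Fin ℓ, (fun j' => if j' = j then X ^ m - C lam else 0) ∈ qtSpan G)
    (hsplit : Polynomial.Splits ((X ^ m - C lam).map (algebraMap F E)))
    (t : ℕ) (β : Fin t → E) (hβinj : Function.Injective β)
    (hβroot : ∀ i, Polynomial.aeval (β i) (∏ j, G j j) = 0)
    (hβall : ∀ x : E, Polynomial.aeval x (∏ j, G j j) = 0 → ∃ i, β i = x)
    (nn : Fin t → ℕ) (V : (i : Fin t) → Matrix (Fin (nn i)) (Fin ℓ) E)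
    (hVind : ∀ i, LinearIndependent E (fun a : Fin (nn i) => V i a))
    (hVspan : ∀ i, Submodule.span E (Set.range fun a : Fin (nn i) => V i a) =
      LinearMap.ker (Matrix.mulVecLin
        (Matrix.of fun r c => Polynomial.aeval (β i) (G r c))))
    (H : Matrix ((i : Fin t) × Fin (nn i)) (Fin m × Fin ℓ) E)
    (hH : ∀ i a k j, H ⟨i, a⟩ (k, j) = β i ^ (k : ℕ) * V i a j) :
    ∀ c : Fin m × Fin ℓ → F,
      toPolyL F m ℓ c ∈ qtSpan G ↔
        H.mulVec (fun p => algebraMap F E (c p)) = 0 := by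
  classical
  intro c
  set f : Fin ℓ → Polynomial F := toPolyL F m ℓ c with hf
  set cE : Fin m × Fin ℓ → E := fun p => algebraMap F E (c p) with hcE
  -- the key computation relating rows of `H` to evaluation of the column polynomials
  have hcomp : ∀ (i : Fin t) (a : Fin (nn i)),
      H.mulVec cE ⟨i, a⟩ = ∑ j, (aeval (β i) (f j)) * V i a j := by
    intro i a
    have h1 : H.mulVec cE ⟨i, a⟩
        = ∑ k : Fin m, ∑ j : Fin ℓ, H ⟨i, a⟩ (k, j) * cE (k, j) := by
      rw [Matrix.mulVec, dotProduct, Fintype.sum_prod_type]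
    rw [h1, Finset.sum_comm]
    refine Finset.sum_congr rfl fun j _ => ?_
    have hfj : f j = ∑ k : Fin m, C (c (k, j)) * X ^ (k : ℕ) := rfl
    have h2 : aeval (β i) (f j) = ∑ k : Fin m, cE (k, j) * β i ^ (k : ℕ) := by
      rw [hfj, map_sum]
      refine Finset.sum_congr rfl fun k _ => ?_
      simp [hcE]
    rw [h2, Finset.sum_mul]
    refine Finset.sum_congr rfl fun k _ => ?_
    rw [hH i a k j]
    ring
  constructor
  · -- membership implies parity checks vanish
    intro hmem
    have key : ∀ v ∈ qtSpan G, ∀ (i : Fin t) (a : Fin (nn i)),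
        ∑ j, (aeval (β i) (v j)) * V i a j = 0 := by
      intro v hv
      induction hv using Submodule.span_induction with
      | mem x hx =>
        obtain ⟨r, rfl⟩ := hx
        intro i a
        have hker : (Matrix.of fun r c' => aeval (β i) (G r c')).mulVec (V i a) = 0 := by
          have hmem' : V i a ∈ LinearMap.ker (Matrix.mulVecLin
              (Matrix.of fun r c' => aeval (β i) (G r c'))) := by
            rw [← hVspan i]
            exact Submodule.subset_span ⟨a, rfl⟩
          rw [LinearMap.mem_ker, Matrix.mulVecLin_apply] at hmem'
          exact hmem'
        have := congrFun hker r
        simpa [Matrix.mulVec, dotProduct] using this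
      | zero => intro i a; simp
      | add x y hx hy ihx ihy =>
        intro i a
        have := ihx i a
        have := ihy i a
        simp only [Pi.add_apply, map_add, add_mul, Finset.sum_add_distrib]
        rw [ihx i a, ihy i a, add_zero]
      | smul p x hx ih =>
        intro i a
        have : ∀ j, aeval (β i) ((p • x) j) = aeval (β i) p * aeval (β i) (x j) := by
          intro j; simp [Pi.smul_apply, smul_eq_mul]
        simp only [this, mul_assoc, ← Finset.mul_sum]
        rw [ih i a, mul_zero]
    funext x
    obtain ⟨i, a⟩ := x
    rw [Pi.zero_apply, hcomp i a]
    exact key f hmem i a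
  · -- parity checks vanishing implies membership
    intro hmv
    set GE : Matrix (Fin ℓ) (Fin ℓ) (Polynomial E) :=
      Matrix.of fun r c' => (G r c').map (algebraMap F E) with hGE
    set PE : Polynomial E := X ^ m - C (algebraMap F E lam) with hPE
    obtain ⟨hnodup, hprodS⟩ := qt_prod_roots (E := E) hm hco hlam hsplit
    set S : Finset E := PE.roots.toFinset with hS
    set fE : Fin ℓ → Polynomial E := fun j => (f j).map (algebraMap F E) with hfE
    have hevalf : ∀ (γ : E) (j : Fin ℓ), eval γ (fE j) = aeval γ (f j) := by
      intro γ j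
      rw [hfE, eval_map, aeval_def]
    have hevalG : ∀ (γ : E) (r j : Fin ℓ), eval γ (GE r j) = aeval γ (G r j) := by
      intro γ r j
      rw [hGE]
      simp only [Matrix.of_apply]
      rw [eval_map, aeval_def]
    -- Step 1: the evaluation vector at each root lies in the row span of the evaluated matrix
    have hB1 : ∀ γ : E, ∃ u : Fin ℓ → E, γ ∈ S →
        ∀ j, aeval γ (f j) = ∑ r, u r * aeval γ (G r j) := by
      intro γ
      by_cases hγS : γ ∈ S
      · set B : Matrix (Fin ℓ) (Fin ℓ) E := Matrix.of fun r c' => aeval γ (G r c') with hB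
        have hw : (fun j => aeval γ (f j)) ∈ Submodule.span E (Set.range fun r => B r) := by
          apply qt_mem_rowspan_of_orth
          intro v hv
          by_cases hex : ∃ i, β i = γ
          · obtain ⟨i, rfl⟩ := hex
            have hvmem : v ∈ Submodule.span E (Set.range fun a : Fin (nn i) => V i a) := by
              rw [hVspan i]
              rw [LinearMap.mem_ker, Matrix.mulVecLin_apply]
              exact hv
            clear hv
            induction hvmem using Submodule.span_induction with
            | mem x hx =>
              obtain ⟨a, rfl⟩ := hx
              have h0 := congrFun hmv ⟨i, a⟩
              rw [Pi.zero_apply, hcomp i a] at h0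
              exact h0
            | zero => simp
            | add x y hx hy ihx ihy =>
              simp only [Pi.add_apply, mul_add, Finset.sum_add_distrib, ihx, ihy, add_zero]
            | smul p x hx ih =>
              simp only [Pi.smul_apply, smul_eq_mul, mul_left_comm, ← Finset.mul_sum, ih,
                mul_zero]
          · have hdet : B.det ≠ 0 := by
              have htri : B.BlockTriangular id := by
                intro i j hij
                simp only [hB, Matrix.of_apply, hupper i j hij, map_zero]
              rw [Matrix.det_of_upperTriangular htri]
              intro h0
              apply hex
              apply hβall
              rw [map_prod]
              exact h0
            have hv0 : v = 0 := Matrix.eq_zero_of_mulVec_eq_zero hdet hv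
            simp [hv0]
        rw [Submodule.mem_span_range_iff_exists_fun] at hw
        obtain ⟨u, hu⟩ := hw
        refine ⟨u, fun _ j => ?_⟩
        have := congrFun hu j
        rw [Finset.sum_apply] at this
        rw [← this]
        refine Finset.sum_congr rfl fun r _ => ?_
        simp [hB]
      · exact ⟨0, fun h => absurd h hγS⟩
    choose u hu using hB1
    -- Step 2: interpolate the coefficients
    set q : Fin ℓ → Polynomial E :=
      fun r => Lagrange.interpolate S id (fun γ => u γ r) with hq
    have hqeval : ∀ γ ∈ S, ∀ r, eval γ (q r) = u γ r := by
      intro γ hγ r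
      have := Lagrange.eval_interpolate_at_node (fun γ => u γ r)
        (Function.injective_id.injOn) hγ
      exact this
    -- Step 3: the difference vanishes at all roots, hence is divisible by `X^m - λ`
    set g : Fin ℓ → Polynomial E := fun j => fE j - ∑ r, q r * GE r j with hg
    have hgroot : ∀ γ ∈ S, ∀ j, eval γ (g j) = 0 := by
      intro γ hγ j
      simp only [hg, eval_sub, eval_finset_sum, eval_mul]
      rw [hevalf γ j, hu γ hγ j]
      rw [sub_eq_zero]
      refine Finset.sum_congr rfl fun r _ => ?_
      rw [hqeval γ hγ r, hevalG γ r j]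
    have hdvd : ∀ j, PE ∣ g j := by
      intro j
      rw [hPE, ← hprodS]
      apply Finset.prod_dvd_of_coprime
      · exact fun γ _ δ _ hne =>
          (Polynomial.pairwise_coprime_X_sub_C Function.injective_id hne)
      · intro γ hγ
        exact dvd_iff_isRoot.2 (hgroot γ hγ j)
    choose h hh using hdvd
    -- Step 4: membership of `fE` in the row span over `E`
    have hqmem : (fun j => ∑ r, q r * GE r j) ∈ qtSpan GE := by
      have heq : (fun j => ∑ r, q r * GE r j) = ∑ r, q r • GE r := by
        funext j
        rw [Finset.sum_apply]
        rfl
      rw [heq]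
      exact Submodule.sum_mem _ fun r _ =>
        Submodule.smul_mem _ _ (Submodule.subset_span ⟨r, rfl⟩)
    have hmapPE : (X ^ m - C lam).map (algebraMap F E) = PE := by
      simp [hPE, Polynomial.map_sub, Polynomial.map_pow]
    have hKE : ∀ j : Fin ℓ, (fun j' => if j' = j then PE else 0) ∈ qtSpan GE := by
      intro j
      have hmem := qt_map_mem (algebraMap F E) G _ (hK j)
      have heq : (fun j' => ((if j' = j then X ^ m - C lam else 0 : Polynomial F)).map
          (algebraMap F E)) = fun j' => if j' = j then PE else 0 := by
        funext j'
        split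
        · exact hmapPE
        · exact Polynomial.map_zero _
      rwa [heq] at hmem
    have hgmem : g ∈ qtSpan GE := by
      have heq : g = ∑ j, (h j) • (fun j' => if j' = j then PE else 0 : Fin ℓ → Polynomial E) := by
        funext j'
        rw [Finset.sum_apply]
        simp only [Pi.smul_apply, smul_eq_mul, mul_ite, mul_zero]
        rw [Finset.sum_ite_eq Finset.univ j' (fun x => h x * PE)]
        simp only [Finset.mem_univ, if_true]
        rw [hh j']
        ring
      rw [heq]
      exact Submodule.sum_mem _ fun j _ => Submodule.smul_mem _ _ (hKE j)
    have hfEmem : fE ∈ qtSpan GE := by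
      have heq : fE = (fun j => ∑ r, q r * GE r j) + g := by
        funext j
        simp [hg]
      rw [heq]
      exact Submodule.add_mem _ hqmem hgmem
    -- Step 5: descent via division with remainder
    set rem : Fin ℓ → Polynomial F := qtRed G ℓ f with hrem
    have hsubmem : f - rem ∈ qtSpan G := qtRed_sub_mem G f ℓ
    have hremdeg : ∀ j, (rem j).degree < (G j j).degree :=
      fun j => qtRed_deg_lt G hupper hmonic f ℓ j j.isLt
    have hmapsub : (fun j => ((f - rem) j).map (algebraMap F E)) ∈ qtSpan GE :=
      qt_map_mem _ G _ hsubmem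
    have hremE : (fun j => (rem j).map (algebraMap F E)) ∈ qtSpan GE := by
      have heq : (fun j => (rem j).map (algebraMap F E))
          = fE - fun j => ((f - rem) j).map (algebraMap F E) := by
        funext j
        simp [hfE, Polynomial.map_sub]
      rw [heq]
      exact Submodule.sub_mem _ hfEmem hmapsub
    have hremE0 : (fun j => (rem j).map (algebraMap F E)) = 0 := by
      apply qt_zero_of_deg_lt GE ?_ _ hremE
      · intro j
        calc ((rem j).map (algebraMap F E)).degree ≤ (rem j).degree := degree_map_le
          _ < (G j j).degree := hremdeg j
          _ = (GE j j).degree := ((hmonic j).degree_map _).symm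
      · intro i j hji
        simp only [hGE, Matrix.of_apply, hupper i j hji, Polynomial.map_zero]
    have hrem0 : rem = 0 := by
      funext j
      have := congrFun hremE0 j
      rw [Pi.zero_apply] at this
      exact (Polynomial.map_eq_zero_iff (algebraMap F E).injective).1 this
    have : f - rem = f := by rw [hrem0, sub_zero]
    rw [← this]
    exact hsubmem
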